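/- Let A : Matrix (Fin n) (Fin n) ℝ be symmetric, and for 0 ≤ k ≤ n let Δ k denote the k-th leading principal minor of A, with Δ 0 = 1. Assume Δ k ≠ 0 for all k with 1 ≤ k ≤ n. Then for every invertible Q : Matrix (Fin n) (Fin n) ℝ and e : Fin n → ℝ with Qᵀ * A * Q = Matrix.diagonal e, the number of positive diagonal coefficients equals the number of sign agreements in the sequence of minors: (Finset.univ.filter fun i => 0 < e i).card = (Finset.univ.filter fun k : Fin n => 0 < Δ k * Δ (k+1)).card. (Darboux 1874, following Jacobi and Borchardt: the number of positive squares of the form equals the number of 'permanences' of the sequence Δ, Δ₁, …, Δ_{n−1}, 1.) -/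
import Mathlib


open Matrix

noncomputable def lm {n : ℕ} (A : Matrix (Fin n) (Fin n) ℝ) (k : ℕ) : ℝ :=
  if h : k ≤ n then (A.submatrix (Fin.castLE h) (Fin.castLE h)).det else 0

lemma lm_self {n : ℕ} (A : Matrix (Fin n) (Fin n) ℝ) : lm A n = A.det := by
  rw [lm, dif_pos le_rfl]
  congr 1

lemma lm_castSucc {n : ℕ} (A : Matrix (Fin (n+1)) (Fin (n+1)) ℝ) (k : ℕ) (hk : k ≤ n) :
    lm (A.submatrix Fin.castSucc Fin.castSucc) k = lm A k := by
  rw [lm, dif_pos hk, lm, dif_pos (hk.trans n.le_succ)]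
  congr 1

lemma jacobi_diag : ∀ (n : ℕ) (A : Matrix (Fin n) (Fin n) ℝ), A.IsSymm →
    (∀ k, k ≤ n → lm A k ≠ 0) →
    ∃ P : Matrix (Fin n) (Fin n) ℝ, IsUnit P.det ∧
      Pᵀ * A * P = diagonal (fun k : Fin n => lm A ((k : ℕ)+1) / lm A (k : ℕ)) := by
  intro n
  induction n with
  | zero =>
    intro A _ _
    exact ⟨1, by simp, by ext i j; exact i.elim0⟩
  | succ n IH =>
    intro A hA hne
    set A' := A.submatrix Fin.castSucc Fin.castSucc with hA'def
    have hlm' : ∀ k, k ≤ n → lm A' k = lm A k := fun k hk => lm_castSucc A k hk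
    have hA' : A'.IsSymm := by
      ext i j
      simp only [hA'def, transpose_apply, submatrix_apply]
      exact hA.apply _ _
    have hne' : ∀ k, k ≤ n → lm A' k ≠ 0 := fun k hk => by
      rw [hlm' k hk]; exact hne k (hk.trans n.le_succ)
    obtain ⟨P', hP'unit, hP'eq⟩ := IH A' hA' hne'
    have hdetA' : A'.det ≠ 0 := by
      have := hne' n le_rfl; rwa [lm_self] at this
    have hA'unit : IsUnit A'.det := isUnit_iff_ne_zero.mpr hdetA'
    set d' : Fin n → ℝ := fun k => lm A' ((k : ℕ)+1) / lm A' (k : ℕ) with hd'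
    set bcol : Matrix (Fin n) (Fin 1) ℝ := fun i _ => A i.castSucc (Fin.last n) with hbcol
    set brow : Matrix (Fin 1) (Fin n) ℝ := fun _ j => A (Fin.last n) j.castSucc with hbrow
    set c : Matrix (Fin 1) (Fin 1) ℝ := fun _ _ => A (Fin.last n) (Fin.last n) with hc
    have hbrowT : brow = bcolᵀ := by
      ext i j
      simp only [hbrow, hbcol, transpose_apply]
      exact (hA.apply _ _).symm
    set ucol : Matrix (Fin n) (Fin 1) ℝ := -(A'⁻¹ * bcol) with hucol
    have hkill : A' * ucol + bcol = 0 := by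
      rw [hucol, Matrix.mul_neg, ← Matrix.mul_assoc, Matrix.mul_nonsing_inv _ hA'unit,
        Matrix.one_mul, neg_add_cancel]
    set R : Matrix (Fin n ⊕ Fin 1) (Fin n ⊕ Fin 1) ℝ := fromBlocks P' ucol 0 1 with hR
    set e : Fin n ⊕ Fin 1 ≃ Fin (n+1) := finSumFinEquiv with he
    have hB : A.submatrix e e = fromBlocks A' bcol brow c := by
      ext (i | i) (j | j) <;>
        simp only [submatrix_apply, fromBlocks_apply₁₁, fromBlocks_apply₁₂,
          fromBlocks_apply₂₁, fromBlocks_apply₂₂, hA'def, hbcol, hbrow, hc, he,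
          finSumFinEquiv_apply_left, finSumFinEquiv_apply_right] <;>
        congr <;>
        first
          | (ext; simp [Fin.castSucc, Fin.castAdd, Fin.castLE, Fin.castLT])
          | (ext; simp [Fin.last, Fin.natAdd, Subsingleton.elim i 0, Subsingleton.elim j 0])
    set s : Matrix (Fin 1) (Fin 1) ℝ := ucolᵀ * bcol + c with hs
    have h12 : P'ᵀ * A' * ucol + P'ᵀ * bcol = 0 := by
      rw [Matrix.mul_assoc, ← Matrix.mul_add, hkill, Matrix.mul_zero]
    have h21 : ucolᵀ * A' + brow = 0 := by
      have : ucolᵀ * A' + brow = (A' * ucol + bcol)ᵀ := by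
        rw [transpose_add, transpose_mul, hA'.eq, hbrowT]
      rw [this, hkill, transpose_zero]
    have hblock : Rᵀ * (A.submatrix e e) * R
        = diagonal (Sum.elim d' (fun _ => s 0 0)) := by
      rw [hB, hR, fromBlocks_transpose, transpose_zero, transpose_one,
        fromBlocks_multiply, fromBlocks_multiply]
      simp only [Matrix.zero_mul, Matrix.mul_zero, Matrix.one_mul, Matrix.mul_one,
        add_zero, zero_add]
      rw [Matrix.mul_assoc P'ᵀ A' ucol] at h12
      rw [show P'ᵀ * A' * P' = diagonal d' from hP'eq, Matrix.mul_assoc P'ᵀ A' ucol, h12,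
        h21, Matrix.zero_mul, Matrix.zero_mul, zero_add]
      have hsval : ucolᵀ * bcol + c = diagonal (fun _ : Fin 1 => s 0 0) := by
        ext i j
        rw [Subsingleton.elim i 0, Subsingleton.elim j 0]
        simp [hs]
      rw [hsval, fromBlocks_diagonal]
    -- determinants
    have hdetR : R.det = P'.det := by
      rw [hR, det_fromBlocks_zero₂₁, det_one, mul_one]
    have hP'ne : P'.det ≠ 0 := hP'unit.ne_zero
    have hsval : s 0 0 = A.det / A'.det := by
      have h1 : (Rᵀ * (A.submatrix e e) * R).det = P'.det ^ 2 * A.det := by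
        rw [det_mul, det_mul, det_transpose, hdetR, det_submatrix_equiv_self]
        ring
      have h2 : (diagonal (Sum.elim d' (fun _ : Fin 1 => s 0 0))).det
          = P'.det ^ 2 * A'.det * s 0 0 := by
        rw [det_diagonal, Fintype.prod_sum_type]
        have : ∏ i : Fin n, Sum.elim d' (fun _ : Fin 1 => s 0 0) (Sum.inl i)
            = P'.det ^ 2 * A'.det := by
          have := congrArg Matrix.det hP'eq
          rw [det_mul, det_mul, det_transpose, det_diagonal] at this
          simp only [Sum.elim_inl]
          rw [← this]; ring
        rw [this]
        simp
      rw [hblock, h2] at h1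
      have h3 : A'.det * s 0 0 = A.det := by
        have hp2 : P'.det ^ 2 ≠ 0 := pow_ne_zero 2 hP'ne
        apply mul_left_cancel₀ hp2
        rw [← mul_assoc]; exact h1
      rw [eq_div_iff hdetA', ← h3]; ring
    -- assemble
    refine ⟨R.submatrix e.symm e.symm, ?_, ?_⟩
    · rw [det_submatrix_equiv_self, hdetR]; exact hP'unit
    · have hAs : (A.submatrix e e).submatrix e.symm e.symm = A := by
        rw [submatrix_submatrix, Equiv.self_comp_symm, submatrix_id_id]
      have key : (R.submatrix e.symm e.symm)ᵀ * A * (R.submatrix e.symm e.symm)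
          = (diagonal (Sum.elim d' (fun _ => s 0 0))).submatrix e.symm e.symm := by
        conv_lhs => rw [transpose_submatrix, ← hAs]
        rw [submatrix_mul_equiv, submatrix_mul_equiv, hblock]
      rw [key, Matrix.submatrix_diagonal_equiv]
      have harg : (Sum.elim d' (fun _ => s 0 0)) ∘ ⇑e.symm
          = fun k : Fin (n+1) => lm A ((k : ℕ)+1) / lm A (k : ℕ) := by
        funext k
        obtain ⟨x, rfl⟩ : ∃ x, k = e x := ⟨e.symm k, (e.apply_symm_apply k).symm⟩
        rw [Function.comp_apply, Equiv.symm_apply_apply]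
        cases x with
        | inl i =>
          have hcoe : ((e (Sum.inl i) : Fin (n+1)) : ℕ) = (i : ℕ) := by simp [he]
          rw [Sum.elim_inl, hcoe, hd']
          dsimp only
          rw [hlm' _ (le_of_lt i.isLt), hlm' _ i.isLt]
        | inr i =>
          have hcoe : ((e (Sum.inr i) : Fin (n+1)) : ℕ) = n := by
            simp [he, Subsingleton.elim i 0]
          rw [Sum.elim_inr, hcoe, hsval, lm_self, ← hlm' n le_rfl, lm_self]
      rw [harg]

/-- coordinate subspace: vectors supported on s -/
def coordSub {n : ℕ} (s : Finset (Fin n)) : Submodule ℝ (Fin n → ℝ) where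
  carrier := {x | ∀ i, i ∉ s → x i = 0}
  add_mem' hx hy i hi := by simp [hx i hi, hy i hi]
  zero_mem' i _ := rfl
  smul_mem' c x hx i hi := by simp [hx i hi]

noncomputable def coordSubEquiv {n : ℕ} (s : Finset (Fin n)) :
    coordSub s ≃ₗ[ℝ] (s → ℝ) where
  toFun x i := x.1 i
  map_add' x y := rfl
  map_smul' c x := rfl
  invFun x := ⟨fun i => if h : i ∈ s then x ⟨i, h⟩ else 0, by
    intro i hi; simp [hi]⟩
  left_inv x := by
    ext i
    by_cases h : i ∈ s <;> simp [h]
    exact (x.2 i h).symm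
  right_inv x := by ext i; simp

lemma coordSub_finrank {n : ℕ} (s : Finset (Fin n)) :
    Module.finrank ℝ (coordSub s) = s.card := by
  rw [(coordSubEquiv s).finrank_eq]
  simp [Module.finrank_fintype_fun_eq_card]

lemma inertia_le {n : ℕ} (d e : Fin n → ℝ) (S : Matrix (Fin n) (Fin n) ℝ)
    (hS : IsUnit S.det) (hcong : Sᵀ * Matrix.diagonal d * S = Matrix.diagonal e) :
    (Finset.univ.filter fun i => 0 < e i).card ≤
      (Finset.univ.filter fun i => 0 < d i).card := by
  by_contra hlt
  push_neg at hlt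
  set Pe := Finset.univ.filter fun i => 0 < e i with hPe
  set Pd := Finset.univ.filter fun i => 0 < d i with hPd
  set Nd := Finset.univ.filter fun i => ¬ 0 < d i with hNd
  have hcard : Pd.card + Nd.card = n := by
    rw [hPd, hNd, Finset.card_filter_add_card_filter_not]
    simp
  have hinv : Invertible S := S.invertibleOfIsUnitDet hS
  let L : (Fin n → ℝ) ≃ₗ[ℝ] (Fin n → ℝ) := S.toLinearEquiv' hinv
  have hL : ∀ x, L x = S *ᵥ x := by
    intro x
    have := Matrix.toLinearEquiv'_apply S hinv
    calc L x = (L : Module.End ℝ (Fin n → ℝ)) x := rfl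
      _ = Matrix.toLin' S x := by rw [this]
      _ = S *ᵥ x := by simp [Matrix.toLin'_apply]
  set U := coordSub Pe
  set W := coordSub Nd
  set W' : Submodule ℝ (Fin n → ℝ) := W.comap (L : (Fin n → ℝ) →ₗ[ℝ] (Fin n → ℝ))
  have hW' : Module.finrank ℝ W' = Nd.card := by
    rw [show W' = W.map (L.symm : (Fin n → ℝ) →ₗ[ℝ] (Fin n → ℝ)) from
      (Submodule.comap_equiv_eq_map_symm L W), LinearEquiv.finrank_map_eq]
    exact coordSub_finrank Nd
  have hdim : 0 < Module.finrank ℝ (U ⊓ W' : Submodule ℝ (Fin n → ℝ)) := by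
    have h1 := Submodule.finrank_sup_add_finrank_inf_eq U W'
    have h2 : Module.finrank ℝ (U ⊔ W' : Submodule ℝ (Fin n → ℝ)) ≤ n := by
      simpa using Submodule.finrank_le (U ⊔ W')
    have h3 : Module.finrank ℝ U = Pe.card := coordSub_finrank Pe
    omega
  have hne : ∃ x : Fin n → ℝ, x ∈ U ⊓ W' ∧ x ≠ 0 := by
    by_contra hb
    push_neg at hb
    have : (U ⊓ W' : Submodule ℝ (Fin n → ℝ)) = ⊥ := by
      rw [Submodule.eq_bot_iff]
      intro x hx
      by_contra hx0
      exact hx0 (by_contra fun h => hx0 (hb x hx ▸ rfl))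
    rw [this] at hdim
    simp at hdim
  obtain ⟨x, hx, hx0⟩ := hne
  have hxU : x ∈ U := hx.1
  have hxW : S *ᵥ x ∈ W := by
    have h2 : L x ∈ W := hx.2
    rwa [hL] at h2
  -- quadratic form computation
  have hq : x ⬝ᵥ (Matrix.diagonal e *ᵥ x) = (S *ᵥ x) ⬝ᵥ (Matrix.diagonal d *ᵥ (S *ᵥ x)) := by
    rw [← hcong]
    rw [← Matrix.mulVec_mulVec, ← Matrix.mulVec_mulVec, Matrix.dotProduct_mulVec,
      Matrix.vecMul_transpose]
  have hpos : 0 < x ⬝ᵥ (Matrix.diagonal e *ᵥ x) := by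
    have hval : x ⬝ᵥ (Matrix.diagonal e *ᵥ x) = ∑ i, e i * x i ^ 2 := by
      simp [dotProduct, Matrix.mulVec_diagonal]
      exact Finset.sum_congr rfl fun i _ => by ring
    rw [hval]
    obtain ⟨j, hj⟩ : ∃ j, x j ≠ 0 := by
      by_contra hc; push_neg at hc; exact hx0 (funext hc)
    have hjPe : j ∈ Pe := by
      by_contra hjc
      exact hj (hxU j hjc)
    apply Finset.sum_pos'
    · intro i _
      by_cases hi : i ∈ Pe
      · have : 0 < e i := (Finset.mem_filter.mp hi).2
        positivity
      · rw [hxU i hi]; simp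
    · refine ⟨j, Finset.mem_univ j, ?_⟩
      have he : 0 < e j := (Finset.mem_filter.mp hjPe).2
      have : 0 < x j ^ 2 := by positivity
      positivity
  have hneg : (S *ᵥ x) ⬝ᵥ (Matrix.diagonal d *ᵥ (S *ᵥ x)) ≤ 0 := by
    have hval : (S *ᵥ x) ⬝ᵥ (Matrix.diagonal d *ᵥ (S *ᵥ x)) = ∑ i, d i * (S *ᵥ x) i ^ 2 := by
      simp [dotProduct, Matrix.mulVec_diagonal]
      exact Finset.sum_congr rfl fun i _ => by ring
    rw [hval]
    apply Finset.sum_nonpos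
    intro i _
    by_cases hi : i ∈ Nd
    · have : ¬ 0 < d i := (Finset.mem_filter.mp hi).2
      have hd : d i ≤ 0 := le_of_not_gt this
      have : 0 ≤ (S *ᵥ x) i ^ 2 := sq_nonneg _
      exact mul_nonpos_of_nonpos_of_nonneg hd this
    · rw [hxW i hi]; simp
  rw [hq] at hpos
  linarith

theorem darboux_permanences
    {n : ℕ} (A : Matrix (Fin n) (Fin n) ℝ) (hA : A.IsSymm)
    (Δ : ℕ → ℝ)
    (hΔ : ∀ (k : ℕ) (h : k ≤ n),
      Δ k = (A.submatrix (Fin.castLE h) (Fin.castLE h)).det)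
    (hne : ∀ k : ℕ, 1 ≤ k → k ≤ n → Δ k ≠ 0) :
    ∀ (Q : Matrix (Fin n) (Fin n) ℝ) (e : Fin n → ℝ), IsUnit Q.det →
      Qᵀ * A * Q = Matrix.diagonal e →
      (Finset.univ.filter fun i => 0 < e i).card =
        (Finset.univ.filter fun k : Fin n => 0 < Δ (k : ℕ) * Δ ((k : ℕ) + 1)).card := by
  intro Q e hQ hQeq
  have hΔlm : ∀ k, k ≤ n → Δ k = lm A k := by
    intro k hk
    rw [lm, dif_pos hk]
    exact hΔ k hk
  have hlm_ne : ∀ k, k ≤ n → lm A k ≠ 0 := by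
    intro k hk
    rcases Nat.eq_zero_or_pos k with rfl | hkpos
    · rw [lm, dif_pos hk]
      simp [Matrix.det_fin_zero]
    · rw [← hΔlm k hk]
      exact hne k hkpos hk
  obtain ⟨P, hP, hPeq⟩ := jacobi_diag n A hA hlm_ne
  set d : Fin n → ℝ := fun k => lm A ((k : ℕ)+1) / lm A (k : ℕ) with hd
  have hPt : IsUnit (Pᵀ).det := by rwa [det_transpose]
  have hQt : IsUnit (Qᵀ).det := by rwa [det_transpose]
  have hS : (P⁻¹ * Q)ᵀ * diagonal d * (P⁻¹ * Q) = diagonal e := by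
    rw [← hPeq, ← hQeq, transpose_mul, transpose_nonsing_inv]
    simp only [Matrix.mul_assoc]
    rw [Matrix.nonsing_inv_mul_cancel_left _ _ hPt, Matrix.mul_nonsing_inv_cancel_left _ _ hP]
  have hT : (Q⁻¹ * P)ᵀ * diagonal e * (Q⁻¹ * P) = diagonal d := by
    rw [← hPeq, ← hQeq, transpose_mul, transpose_nonsing_inv]
    simp only [Matrix.mul_assoc]
    rw [Matrix.nonsing_inv_mul_cancel_left _ _ hQt, Matrix.mul_nonsing_inv_cancel_left _ _ hQ]
  have hSu : IsUnit (P⁻¹ * Q).det := by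
    rw [det_mul]; exact (P.isUnit_nonsing_inv_det hP).mul hQ
  have hTu : IsUnit (Q⁻¹ * P).det := by
    rw [det_mul]; exact (Q.isUnit_nonsing_inv_det hQ).mul hP
  have hcard : (Finset.univ.filter fun i => 0 < e i).card
      = (Finset.univ.filter fun i => 0 < d i).card :=
    le_antisymm (inertia_le d e _ hSu hS) (inertia_le e d _ hTu hT)
  rw [hcard]
  congr 1
  apply Finset.filter_congr
  intro k _
  have h1 : Δ (k : ℕ) = lm A (k : ℕ) := hΔlm _ (le_of_lt k.isLt)
  have h2 : Δ ((k : ℕ) + 1) = lm A ((k : ℕ) + 1) := hΔlm _ k.isLt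
  rw [hd, h1, h2]
  dsimp only
  rw [div_pos_iff, mul_pos_iff]
  tauto
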